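/- (Polynomial-time stabilization) Let (N, D, θ) be a sandpile model in dimension d with complete neighborhood N, set r = max{|v|_∞ : v ∈ N}, and let c be a configuration lying within the elementary hypercube of side n with c(x) < 2θ for every cell x. Then the parallel dynamics reaches a stable configuration within at most T = 2^{3d+4} · d^{d+1} · θ^{d+2} · r^{d+1} · n^{d²+2d} steps: the configuration F^T(c) is stable. -/

import Mathlib

/-- A sandpile model in dimension `d`: a finite nonempty neighborhood
`N ⊆ ℤ^d \ {0}` and a distribution `D` with `D v ≥ 1` for `v ∈ N`. -/
structure Sandpile (d : ℕ) where
  N : Finset (Fin d → ℤ)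
  D : (Fin d → ℤ) → ℕ
  N_nonempty : N.Nonempty
  zero_not_mem : (0 : Fin d → ℤ) ∉ N
  D_pos : ∀ v ∈ N, 1 ≤ D v

/-- The stability threshold `θ = Σ_{v ∈ N} D(v)`. -/
def Sandpile.θ {d : ℕ} (M : Sandpile d) : ℕ := ∑ v ∈ M.N, M.D v

/-- The Heaviside function: `H n = 1` if `n ≥ 0`, else `0`. -/
def Heaviside (n : ℤ) : ℕ := if 0 ≤ n then 1 else 0

/-- The parallel global rule `F`. -/
def Sandpile.F {d : ℕ} (M : Sandpile d) (c : (Fin d → ℤ) → ℕ) : (Fin d → ℤ) → ℕ :=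
  fun x => c x - M.θ * Heaviside ((c x : ℤ) - (M.θ : ℤ))
    + ∑ y ∈ M.N, M.D y * Heaviside ((c (x + y) : ℤ) - (M.θ : ℤ))

/-- A configuration is stable when every cell holds fewer than `θ` grains. -/
def Sandpile.Stable {d : ℕ} (M : Sandpile d) (c : (Fin d → ℤ) → ℕ) : Prop :=
  ∀ x, c x < M.θ

/-- A configuration is finite when its total number of grains is finite,
equivalently its support is finite. -/
def FiniteConfig {d : ℕ} (c : (Fin d → ℤ) → ℕ) : Prop :=
  (Function.support c).Finite

/-- Sequential toppling at an unstable cell `x`: remove `θ` grains from `x`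
and add `D(y−x)` grains to each `y ∈ x + N`, other cells unchanged. -/
def Sandpile.SeqStepAt {d : ℕ} (M : Sandpile d) (x : Fin d → ℤ)
    (c c' : (Fin d → ℤ) → ℕ) : Prop :=
  M.θ ≤ c x ∧
    ∀ y, c' y = (if y = x then c y - M.θ else c y)
      + (if y - x ∈ M.N then M.D (y - x) else 0)

/-- `c ⇀ c'`: a sequential toppling at some unstable cell. -/
def Sandpile.SeqStep {d : ℕ} (M : Sandpile d)
    (c c' : (Fin d → ℤ) → ℕ) : Prop :=
  ∃ x, M.SeqStepAt x c c'

/-- `c ⇀* c'`: reflexive–transitive closure of `⇀`. -/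
def Sandpile.SeqReach {d : ℕ} (M : Sandpile d)
    (c c' : (Fin d → ℤ) → ℕ) : Prop :=
  Relation.ReflTransGen M.SeqStep c c'

/-- The neighborhood is complete: every element of `ℤ^d` is a nonnegative
integer combination of elements of `N`. -/
def Sandpile.Complete {d : ℕ} (M : Sandpile d) : Prop :=
  ∀ z : Fin d → ℤ, ∃ a : (Fin d → ℤ) → ℕ, z = ∑ v ∈ M.N, (a v : ℤ) • v

/-- The configuration lies within the elementary hypercube of side `n`:
`c x = 0` for all `x ∉ {0,…,n−1}^d`. -/
def InCube {d : ℕ} (n : ℕ) (c : (Fin d → ℤ) → ℕ) : Prop :=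
  ∀ x : Fin d → ℤ, (¬ ∀ i, 0 ≤ x i ∧ x i < (n : ℤ)) → c x = 0

/-- Add one grain at cell `y` (i.e. `c + 1_y`). -/
def addGrain {d : ℕ} (c : (Fin d → ℤ) → ℕ) (y : Fin d → ℤ) : (Fin d → ℤ) → ℕ :=
  fun x => if x = y then c x + 1 else c x

/-- `r` is the maximal sup-norm of a neighborhood vector:
`r = max{|v|_∞ : v ∈ N}`. -/
def Sandpile.IsRadius {d : ℕ} (M : Sandpile d) (r : ℕ) : Prop :=
  (∀ v ∈ M.N, ∀ i, (v i).natAbs ≤ r) ∧ (∃ v ∈ M.N, ∃ i, (v i).natAbs = r)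

open Finset

section Aux
variable {d : ℕ}

lemma heav_eq (a b : ℕ) : Heaviside ((a:ℤ) - (b:ℤ)) = if b ≤ a then 1 else 0 := by
  simp [Heaviside, sub_nonneg]

lemma theta_pos (M : Sandpile d) : 1 ≤ M.θ := by
  obtain ⟨v, hv⟩ := M.N_nonempty
  calc 1 ≤ M.D v := M.D_pos v hv
  _ ≤ ∑ w ∈ M.N, M.D w := Finset.single_le_sum (fun _ _ => Nat.zero_le _) hv

lemma F_key (M : Sandpile d) (c : (Fin d → ℤ) → ℕ) (x : Fin d → ℤ) :
    M.F c x + M.θ * (if M.θ ≤ c x then 1 else 0)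
      = c x + ∑ y ∈ M.N, M.D y * (if M.θ ≤ c (x + y) then 1 else 0) := by
  have hsub : M.θ * (if M.θ ≤ c x then 1 else 0) ≤ c x := by
    split
    · simpa using ‹M.θ ≤ c x›
    · simp
  simp only [Sandpile.F, heav_eq]
  set a := M.θ * (if M.θ ≤ c x then 1 else 0) with ha
  set S := ∑ y ∈ M.N, M.D y * (if M.θ ≤ c (x + y) then 1 else 0) with hS
  omega

lemma F_stable_fix (M : Sandpile d) (c : (Fin d → ℤ) → ℕ) (h : M.Stable c) :
    M.F c = c := by
  funext x
  have hk := F_key M c x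
  have h1 : (if M.θ ≤ c x then 1 else 0) = 0 := by
    rw [if_neg]; exact not_le.2 (h x)
  have h2 : ∑ y ∈ M.N, M.D y * (if M.θ ≤ c (x + y) then 1 else 0) = 0 := by
    apply Finset.sum_eq_zero
    intro y _
    rw [if_neg (not_le.2 (h (x+y))), mul_zero]
  rw [h1, h2] at hk
  omega

lemma F_ge_target (M : Sandpile d) (c : (Fin d → ℤ) → ℕ) (x y : Fin d → ℤ)
    (hy : y ∈ M.N) (h : M.θ ≤ c (x + y)) : M.D y ≤ M.F c x := by
  have hsub : M.θ * (if M.θ ≤ c x then 1 else 0) ≤ c x := by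
    split
    · simpa using ‹M.θ ≤ c x›
    · simp
  have hterm : M.D y ≤ ∑ z ∈ M.N, M.D z * (if M.θ ≤ c (x + z) then 1 else 0) := by
    have h2 := Finset.single_le_sum
      (f := fun z => M.D z * (if M.θ ≤ c (x + z) then 1 else 0))
      (fun _ _ => Nat.zero_le _) hy
    simp only [if_pos h, mul_one] at h2
    exact h2
  have hk := F_key M c x
  set a := M.θ * (if M.θ ≤ c x then 1 else 0) with ha
  set S := ∑ z ∈ M.N, M.D z * (if M.θ ≤ c (x + z) then 1 else 0) with hS
  omega

lemma F_mono_cell (M : Sandpile d) (c : (Fin d → ℤ) → ℕ) (x : Fin d → ℤ)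
    (h : c x < M.θ) : c x ≤ M.F c x := by
  have hk := F_key M c x
  rw [if_neg (not_le.2 h), mul_zero, add_zero] at hk
  omega

lemma F_ne_zero (M : Sandpile d) (c : (Fin d → ℤ) → ℕ) (x : Fin d → ℤ)
    (h : M.F c x ≠ 0) : c x ≠ 0 ∨ ∃ y ∈ M.N, M.θ ≤ c (x + y) := by
  by_contra hc
  push_neg at hc
  obtain ⟨h0, hall⟩ := hc
  apply h
  have hk := F_key M c x
  have h1 : (if M.θ ≤ c x then 1 else 0) = 0 := by
    rw [if_neg]; rw [h0]; exact fun hh => absurd (Nat.le_zero.1 hh) (by have := theta_pos M; omega)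
  have h2 : ∑ y ∈ M.N, M.D y * (if M.θ ≤ c (x + y) then 1 else 0) = 0 := by
    apply Finset.sum_eq_zero
    intro y hy
    rw [if_neg (not_le.2 (hall y hy)), mul_zero]
  rw [h1, h2] at hk
  omega

lemma stable_persist (M : Sandpile d) (c : (Fin d → ℤ) → ℕ) (t : ℕ)
    (h : M.Stable (M.F^[t] c)) : ∀ k, M.F^[t + k] c = M.F^[t] c := by
  intro k
  induction k with
  | zero => rfl
  | succ k ih =>
      have : t + (k + 1) = (t + k) + 1 := by omega
      rw [this, Function.iterate_succ_apply', ih]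
      exact F_stable_fix M _ h

end Aux

section Conf
variable {d : ℕ}

/-- From completeness: there is a neighborhood vector whose `i`-th coordinate
has sign `ε`. -/
lemma exists_dir (M : Sandpile d) (hcomp : M.Complete) (i : Fin d) (ε : ℤ)
    (hε : ε = 1 ∨ ε = -1) : ∃ y ∈ M.N, 1 ≤ ε * y i := by
  obtain ⟨a, ha⟩ := hcomp (Pi.single i ε)
  by_contra hno
  push_neg at hno
  have hcoord : (Pi.single i ε : Fin d → ℤ) i = ∑ v ∈ M.N, (a v : ℤ) * v i := by
    rw [ha]
    rw [Finset.sum_apply]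
    simp [Pi.smul_apply]
  rw [Pi.single_eq_same] at hcoord
  have h1 : ε * ε = 1 := by rcases hε with h | h <;> simp [h]
  have h2 : ε * (∑ v ∈ M.N, (a v : ℤ) * v i) ≤ 0 := by
    rw [Finset.mul_sum]
    apply Finset.sum_nonpos
    intro v hv
    have hv1 : ε * v i ≤ 0 := by
      have h3 := hno v hv
      exact Int.lt_add_one_iff.mp (by simpa using h3)
    have : ε * ((a v : ℤ) * v i) = (a v : ℤ) * (ε * v i) := by ring
    rw [this]
    exact mul_nonpos_of_nonneg_of_nonpos (by positivity) hv1
  rw [← hcoord, h1] at h2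
  exact absurd h2 (by norm_num)

lemma abs_coord_le (M : Sandpile d) (r : ℕ) (hr : M.IsRadius r) :
    ∀ v ∈ M.N, ∀ i, |v i| ≤ (r : ℤ) := by
  intro v hv i
  have := hr.1 v hv i
  rw [Int.abs_eq_natAbs]
  exact_mod_cast this

lemma r_pos (M : Sandpile d) (hcomp : M.Complete) (r : ℕ) (hr : M.IsRadius r)
    (hd : 1 ≤ d) : 1 ≤ r := by
  obtain ⟨y, hy, h1⟩ := exists_dir M hcomp ⟨0, hd⟩ 1 (Or.inl rfl)
  have h2 := abs_coord_le M r hr y hy ⟨0, hd⟩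
  rw [one_mul] at h1
  have : (1:ℤ) ≤ r := le_trans (le_trans h1 (le_abs_self _)) h2
  exact_mod_cast this

/-- The initial cube as a finset. -/
noncomputable def cubeF (d n : ℕ) : Finset (Fin d → ℤ) :=
  Fintype.piFinset fun _ => Finset.Icc 0 ((n:ℤ) - 1)

lemma mem_cubeF {d n : ℕ} {x : Fin d → ℤ} :
    x ∈ cubeF d n ↔ ∀ i, 0 ≤ x i ∧ x i < (n:ℤ) := by
  rw [cubeF, Fintype.mem_piFinset]
  apply forall_congr'
  intro i
  rw [Finset.mem_Icc]
  omega

lemma card_cubeF (d n : ℕ) : (cubeF d n).card = n ^ d := by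
  rw [cubeF, Fintype.card_piFinset]
  simp [Int.card_Icc]

/-- Finsets containing the support of the orbit. -/
noncomputable def St (M : Sandpile d) (n : ℕ) : ℕ → Finset (Fin d → ℤ)
  | 0 => cubeF d n
  | t+1 => St M n t ∪ M.N.biUnion fun y => (St M n t).image fun z => z - y

lemma St_mono (M : Sandpile d) (n : ℕ) : ∀ {s t : ℕ}, s ≤ t → St M n s ⊆ St M n t := by
  intro s t h
  induction t with
  | zero => rw [Nat.le_zero.1 h]
  | succ t ih =>
      rcases Nat.lt_or_ge s (t+1) with hlt | hge
      · exact (ih (by omega)).trans (Finset.subset_union_left)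
      · have : s = t + 1 := by omega
        rw [this]

lemma supp_sub (M : Sandpile d) (n : ℕ) (c : (Fin d → ℤ) → ℕ) (hcube : InCube n c) :
    ∀ t x, M.F^[t] c x ≠ 0 → x ∈ St M n t := by
  intro t
  induction t with
  | zero =>
      intro x hx
      rw [St, mem_cubeF]
      by_contra hmem
      exact hx (hcube x hmem)
  | succ t ih =>
      intro x hx
      rw [Function.iterate_succ_apply'] at hx
      rcases F_ne_zero M _ x hx with h | ⟨y, hy, hθ⟩
      · exact Finset.mem_union_left _ (ih x h)
      · apply Finset.mem_union_right
        apply Finset.mem_biUnion.2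
        refine ⟨y, hy, Finset.mem_image.2 ⟨x + y, ih _ ?_, by rw [add_sub_cancel_right]⟩⟩
        have := theta_pos M
        omega

lemma target_mem (M : Sandpile d) (n : ℕ) (c : (Fin d → ℤ) → ℕ) (hcube : InCube n c)
    (t : ℕ) (x y : Fin d → ℤ) (hy : y ∈ M.N) (h : M.θ ≤ M.F^[t] c (x + y)) :
    x ∈ St M n (t+1) := by
  apply Finset.mem_union_right
  apply Finset.mem_biUnion.2
  refine ⟨y, hy, Finset.mem_image.2 ⟨x + y, supp_sub M n c hcube t _ ?_, by rw [add_sub_cancel_right]⟩⟩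
  have := theta_pos M
  omega

/-- One-step conservation of mass on a sufficiently large finite box. -/
lemma sum_F (M : Sandpile d) (c : (Fin d → ℤ) → ℕ) (B : Finset (Fin d → ℤ))
    (hs : ∀ x, c x ≠ 0 → x ∈ B)
    (ht : ∀ x y, y ∈ M.N → M.θ ≤ c (x + y) → x ∈ B) :
    ∑ x ∈ B, M.F c x = ∑ x ∈ B, c x := by
  have h1 : ∑ x ∈ B, (M.F c x + M.θ * (if M.θ ≤ c x then 1 else 0))
      = ∑ x ∈ B, (c x + ∑ y ∈ M.N, M.D y * (if M.θ ≤ c (x + y) then 1 else 0)) :=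
    Finset.sum_congr rfl (fun x _ => F_key M c x)
  rw [Finset.sum_add_distrib, Finset.sum_add_distrib] at h1
  have hcount : ∀ y ∈ M.N, ∑ x ∈ B, (if M.θ ≤ c (x + y) then 1 else 0)
      = ∑ x ∈ B, (if M.θ ≤ c x then 1 else 0) := by
    intro y hy
    rw [← Finset.card_filter, ← Finset.card_filter]
    apply Finset.card_nbij (i := fun x => x + y)
    · intro a ha
      rw [Finset.mem_coe, Finset.mem_filter] at ha ⊢
      have hne : c (a + y) ≠ 0 := by have := theta_pos M; omega
      exact ⟨hs _ hne, ha.2⟩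
    · intro a _ b _ hab
      simpa using hab
    · intro u hu
      rw [Finset.mem_coe, Finset.mem_filter] at hu
      refine ⟨u - y, ?_, by simp [sub_add_cancel]⟩
      rw [Finset.mem_coe, Finset.mem_filter]
      have huy : u - y + y = u := sub_add_cancel u y
      constructor
      · exact ht (u - y) y hy (by rw [huy]; exact hu.2)
      · rw [huy]; exact hu.2
  have h2 : ∑ x ∈ B, ∑ y ∈ M.N, M.D y * (if M.θ ≤ c (x + y) then 1 else 0)
      = ∑ x ∈ B, M.θ * (if M.θ ≤ c x then 1 else 0) := by
    rw [Finset.sum_comm]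
    have : ∀ y ∈ M.N, ∑ x ∈ B, M.D y * (if M.θ ≤ c (x + y) then 1 else 0)
        = M.D y * ∑ x ∈ B, (if M.θ ≤ c x then 1 else 0) := by
      intro y hy
      rw [← Finset.mul_sum, hcount y hy]
    rw [Finset.sum_congr rfl this, ← Finset.sum_mul]
    rw [Finset.mul_sum]
    rfl
  omega

end Conf

section Conf2
variable {d : ℕ}

lemma sum_orb (M : Sandpile d) (c : (Fin d → ℤ) → ℕ) (B : Finset (Fin d → ℤ)) :
    ∀ τ, (∀ t, t < τ → (∀ x, M.F^[t] c x ≠ 0 → x ∈ B) ∧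
        (∀ x y, y ∈ M.N → M.θ ≤ M.F^[t] c (x + y) → x ∈ B)) →
    ∑ x ∈ B, M.F^[τ] c x = ∑ x ∈ B, c x := by
  intro τ
  induction τ with
  | zero => intro _; rfl
  | succ τ ih =>
      intro hB
      rw [Function.iterate_succ_apply',
        sum_F M _ B (hB τ (by omega)).1 (fun x y hy h => (hB τ (by omega)).2 x y hy h)]
      exact ih (fun t ht => hB t (by omega))

lemma mass_le (M : Sandpile d) (n : ℕ) (c : (Fin d → ℤ) → ℕ)
    (hcube : InCube n c) (hbound : ∀ x, c x < 2 * M.θ)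
    (B : Finset (Fin d → ℤ)) (hC : cubeF d n ⊆ B) :
    ∑ x ∈ B, c x ≤ (2 * M.θ - 1) * n ^ d := by
  have h1 : ∑ x ∈ B, c x = ∑ x ∈ cubeF d n, c x := by
    symm
    apply Finset.sum_subset hC
    intro x _ hx
    exact hcube x (fun h => hx (mem_cubeF.2 h))
  rw [h1]
  calc ∑ x ∈ cubeF d n, c x ≤ ∑ _x ∈ cubeF d n, (2 * M.θ - 1) :=
        Finset.sum_le_sum (fun x _ => by have := hbound x; omega)
  _ = (cubeF d n).card * (2 * M.θ - 1) := by rw [Finset.sum_const, smul_eq_mul]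
  _ = (2 * M.θ - 1) * n ^ d := by rw [card_cubeF]; ring

lemma dir_abs (M : Sandpile d) (r : ℕ) (hr : M.IsRadius r) {y : Fin d → ℤ}
    (hy : y ∈ M.N) (i : Fin d) (ε : ℤ) (hε : ε = 1 ∨ ε = -1) :
    -(r:ℤ) ≤ ε * y i ∧ ε * y i ≤ r := by
  have h := abs_coord_le M r hr y hy i
  rw [abs_le] at h
  rcases hε with h' | h' <;> subst h' <;>
    simp only [one_mul, neg_one_mul] <;> omega

lemma crossing (M : Sandpile d) (n : ℕ) (c : (Fin d → ℤ) → ℕ)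
    (hcube : InCube n c) (r : ℕ) (hr : M.IsRadius r)
    (i : Fin d) (ε : ℤ) (hε : ε = 1 ∨ ε = -1) (b : ℤ) (hb : (n:ℤ) ≤ b) :
    ∀ t (x : Fin d → ℤ), M.F^[t] c x ≠ 0 → b ≤ ε * x i →
    ∃ s, s ≤ t ∧ ∃ w, M.θ ≤ M.F^[s] c w ∧ b - r ≤ ε * w i ∧ ε * w i < b := by
  intro t
  induction t with
  | zero =>
      intro x hx hlev
      exfalso
      have hcb : ∀ j, 0 ≤ x j ∧ x j < (n:ℤ) := by
        by_contra hmem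
        exact hx (hcube x hmem)
      have h1 := (hcb i).1
      have h2 := (hcb i).2
      rcases hε with h' | h' <;> subst h' <;>
        simp only [one_mul, neg_one_mul] at hlev <;> omega
  | succ t ih =>
      intro x hx hlev
      rw [Function.iterate_succ_apply'] at hx
      rcases F_ne_zero M _ x hx with h | ⟨y, hy, hθ⟩
      · obtain ⟨s, hs, hw⟩ := ih x h hlev
        exact ⟨s, by omega, hw⟩
      · have hyb := dir_abs M r hr hy i ε hε
        have hxy : ε * (x + y) i = ε * x i + ε * y i := by
          rw [Pi.add_apply]; ring
        set A := ε * x i with hA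
        set By := ε * y i with hBy
        set C := ε * (x + y) i with hC
        by_cases hlt : C < b
        · exact ⟨t, by omega, x + y, hθ, by omega, hlt⟩
        · have hne : M.F^[t] c (x + y) ≠ 0 := by
            have := theta_pos M
            omega
          obtain ⟨s, hs, hw⟩ := ih (x + y) hne (by omega)
          exact ⟨s, by omega, hw⟩

end Conf2

section Frontier
variable {d : ℕ}

lemma sp_frontier (M : Sandpile d) (hcomp : M.Complete) (r : ℕ) (hr : M.IsRadius r)
    (n : ℕ) (c : (Fin d → ℤ) → ℕ) (hcube : InCube n c)
    (hbound : ∀ x, c x < 2 * M.θ)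
    (i : Fin d) (ε : ℤ) (hε : ε = 1 ∨ ε = -1) :
    ∀ t x, M.F^[t] c x ≠ 0 →
      ε * x i < ((n + 3 * r * ((2 * M.θ - 1) * n ^ d + 1) : ℕ) : ℤ) := by
  classical
  intro t x hx
  by_contra hfar
  push_neg at hfar
  set Smax : ℕ := (2 * M.θ - 1) * n ^ d with hSmaxdef
  -- Window witnesses: for each j ≤ Smax there is a supported cell at time t
  -- whose level lies in the window [n+3rj, n+3rj+3r).
  have key : ∀ j : ℕ, j ≤ Smax → ∃ z, M.F^[t] c z ≠ 0 ∧
      (n:ℤ) + 3*r*j ≤ ε * z i ∧ ε * z i < (n:ℤ) + 3*r*j + 3*r := by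
    intro j hj
    have hb : (n:ℤ) ≤ (n:ℤ) + 3*r*j + 3*r := by
      have h1 : (0:ℤ) ≤ 3*(r:ℤ)*(j:ℤ) := by positivity
      have h2 : (0:ℤ) ≤ 3*(r:ℤ) := by positivity
      linarith
    have hble : (n:ℤ) + 3*r*j + 3*r ≤ ε * x i := by
      have h1 : 3*(r:ℤ)*(j:ℤ) + 3*(r:ℤ) ≤ 3*(r:ℤ)*((Smax:ℤ)+1) := by
        have hj' : (j:ℤ) + 1 ≤ (Smax:ℤ) + 1 := by exact_mod_cast by omega
        nlinarith [Int.natCast_nonneg r]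
      have h2 : ((n + 3 * r * (Smax + 1) : ℕ) : ℤ)
          = (n:ℤ) + 3*(r:ℤ)*((Smax:ℤ)+1) := by push_cast; ring
      rw [h2] at hfar
      linarith
    obtain ⟨s, hst, w, hw1, hw2, hw3⟩ :=
      crossing M n c hcube r hr i ε hε ((n:ℤ) + 3*r*j + 3*r) hb t x hx hble
    -- the toppling site w lies in the window
    set aj : ℤ := (n:ℤ) + 3*r*j with hajdef
    have hw2' : aj ≤ ε * w i := by
      have h2 : (0:ℤ) ≤ 2*(r:ℤ) := by positivity
      rw [hajdef]; linarith
    have hw3' : ε * w i < aj + 3*r := by rw [hajdef]; linarith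
    -- the last toppling in the window before time t
    set P : ℕ → Prop := fun s' => ∃ w', M.θ ≤ M.F^[s'] c w' ∧
      aj ≤ ε * w' i ∧ ε * w' i < aj + 3*r with hPdef
    have hPs : P s := ⟨w, hw1, hw2', hw3'⟩
    have hPstar : P (Nat.findGreatest P t) := Nat.findGreatest_spec hst hPs
    have hsle : Nat.findGreatest P t ≤ t := Nat.findGreatest_le t
    set s₀ := Nat.findGreatest P t with hs₀def
    obtain ⟨w', hw'1, hw'2, hw'3⟩ := hPstar
    rcases eq_or_lt_of_le hsle with heq | hlt
    · refine ⟨w', ?_, hw'2, hw'3⟩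
      rw [heq] at hw'1
      have := theta_pos M
      omega
    · -- retention: the last window toppling deposits a grain that stays
      have hmax : ∀ s', s₀ < s' → s' ≤ t → ∀ w'', M.θ ≤ M.F^[s'] c w'' →
          ¬(aj ≤ ε * w'' i ∧ ε * w'' i < aj + 3*r) := by
        intro s' h1 h2 w'' h3 h4
        exact Nat.findGreatest_is_greatest h1 h2 ⟨w'', h3, h4.1, h4.2⟩
      -- choose the direction of the deposited grain
      have hdir : ∃ y ∈ M.N, (ε * w' i < aj + 2*r → 1 ≤ (-ε) * y i) ∧
          (¬(ε * w' i < aj + 2*r) → 1 ≤ ε * y i) := by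
        by_cases hhalf : ε * w' i < aj + 2*r
        · obtain ⟨y, hyN, hy1⟩ := exists_dir M hcomp i (-ε)
            (by rcases hε with h | h <;> simp [h])
          exact ⟨y, hyN, fun _ => hy1, fun h => absurd hhalf h⟩
        · obtain ⟨y, hyN, hy1⟩ := exists_dir M hcomp i ε hε
          exact ⟨y, hyN, fun h => absurd h hhalf, fun _ => hy1⟩
      obtain ⟨y, hyN, hy1, hy2⟩ := hdir
      have hyb := dir_abs M r hr hyN i ε hε
      set z := w' - y with hzdef
      have hzy : z + y = w' := sub_add_cancel w' y
      have hzlev : ε * z i = ε * w' i - ε * y i := by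
        rw [hzdef, Pi.sub_apply]; ring
      have hzwin : aj ≤ ε * z i ∧ ε * z i < aj + 3*r := by
        by_cases hhalf : ε * w' i < aj + 2*r
        · have h1 := hy1 hhalf
          have h2 : ε * y i ≤ -1 := by
            have : (-ε) * y i = -(ε * y i) := by ring
            omega
          constructor <;> [skip; skip] <;> rw [hzlev] <;> omega
        · have h1 := hy2 hhalf
          push_neg at hhalf
          constructor <;> rw [hzlev] <;> omega
      -- the deposited grain
      have hz1 : 1 ≤ M.F^[s₀+1] c z := by
        rw [Function.iterate_succ_apply']
        have := F_ge_target M (M.F^[s₀] c) z y hyN (by rw [hzy]; exact hw'1)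
        have := M.D_pos y hyN
        omega
      -- it never leaves
      have climb : ∀ k, s₀ + 1 + k ≤ t → 1 ≤ M.F^[s₀+1+k] c z := by
        intro k
        induction k with
        | zero => intro _; simpa using hz1
        | succ k ih =>
            intro hk
            have hprev := ih (by omega)
            have hstab : M.F^[s₀+1+k] c z < M.θ := by
              by_contra hge
              push_neg at hge
              exact hmax (s₀+1+k) (by omega) (by omega) z hge hzwin
            have heq : s₀+1+(k+1) = (s₀+1+k)+1 := by omega
            rw [heq, Function.iterate_succ_apply']
            exact le_trans hprev (F_mono_cell M _ z hstab)
      have hfin := climb (t - s₀ - 1) (by omega)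
      have heq2 : s₀ + 1 + (t - s₀ - 1) = t := by omega
      rw [heq2] at hfin
      exact ⟨z, by omega, hzwin.1, hzwin.2⟩
  -- collect the S+1 witnesses; they are distinct, so the mass is ≥ S+1.
  choose! zf hz0 hz1 hz2 using key
  have hinj : ∀ j ∈ Finset.range (Smax+1), ∀ j' ∈ Finset.range (Smax+1),
      zf j = zf j' → j = j' := by
    intro j hj j' hj' heq
    rw [Finset.mem_range] at hj hj'
    by_contra hne
    -- wlog j < j'
    have hcase : ∀ a b : ℕ, a < b → b ≤ Smax → zf a = zf b → False := by
      intro a b hab hb hzeq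
      have h1 := hz2 a (by omega)
      have h2 := hz1 b hb
      rw [hzeq] at h1
      have h3 : 3*(r:ℤ)*(a:ℤ) + 3*(r:ℤ) ≤ 3*(r:ℤ)*(b:ℤ) := by
        have hab' : (a:ℤ) + 1 ≤ (b:ℤ) := by exact_mod_cast hab
        nlinarith [Int.natCast_nonneg r]
      linarith
    rcases Nat.lt_or_ge j j' with h | h
    · exact hcase j j' h (by omega) heq
    · exact hcase j' j (by omega) (by omega) heq.symm
  set B := St M n t with hBdef
  have hmass : ∑ x' ∈ B, M.F^[t] c x' = ∑ x' ∈ B, c x' := by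
    apply sum_orb
    intro t' ht'
    constructor
    · intro x' hx'
      exact St_mono M n (by omega) (supp_sub M n c hcube t' x' hx')
    · intro x' y hy h
      exact St_mono M n (by omega : t'+1 ≤ t) (target_mem M n c hcube t' x' y hy h)
  have hup : ∑ x' ∈ B, c x' ≤ Smax := by
    apply mass_le M n c hcube hbound
    have h0 : cubeF d n = St M n 0 := by rw [St]
    rw [h0]
    exact St_mono M n (Nat.zero_le t)
  have hdown : Smax + 1 ≤ ∑ x' ∈ B, M.F^[t] c x' := by
    have hZB : (Finset.range (Smax+1)).image zf ⊆ B := by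
      intro z' hz'
      rw [Finset.mem_image] at hz'
      obtain ⟨j, hj, hjz⟩ := hz'
      rw [Finset.mem_range] at hj
      rw [← hjz]
      exact supp_sub M n c hcube t (zf j) (hz0 j (by omega))
    calc Smax + 1 = ∑ _j ∈ Finset.range (Smax+1), 1 := by
          rw [Finset.sum_const, smul_eq_mul, Finset.card_range, mul_one]
    _ ≤ ∑ j ∈ Finset.range (Smax+1), M.F^[t] c (zf j) := by
          apply Finset.sum_le_sum
          intro j hj
          rw [Finset.mem_range] at hj
          have := hz0 j (by omega)
          omega
    _ = ∑ z' ∈ (Finset.range (Smax+1)).image zf, M.F^[t] c z' :=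
          (Finset.sum_image hinj).symm
    _ ≤ ∑ x' ∈ B, M.F^[t] c x' :=
          Finset.sum_le_sum_of_subset hZB
  omega

end Frontier

section Potential
variable {d : ℕ}

/-- The confinement radius. -/
def R1 (M : Sandpile d) (n r : ℕ) : ℕ := n + 3 * r * ((2 * M.θ - 1) * n ^ d + 1)

/-- The confinement box. -/
noncomputable def boxF (d R : ℕ) : Finset (Fin d → ℤ) :=
  Fintype.piFinset fun _ => Finset.Icc (-(R:ℤ)) (R:ℤ)

lemma mem_boxF {d R : ℕ} {x : Fin d → ℤ} :
    x ∈ boxF d R ↔ ∀ i, -(R:ℤ) ≤ x i ∧ x i ≤ R := by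
  rw [boxF, Fintype.mem_piFinset]
  apply forall_congr'
  intro i
  rw [Finset.mem_Icc]

lemma supp_box (M : Sandpile d) (hcomp : M.Complete) (r : ℕ) (hr : M.IsRadius r)
    (n : ℕ) (c : (Fin d → ℤ) → ℕ) (hcube : InCube n c)
    (hbound : ∀ x, c x < 2 * M.θ) :
    ∀ t x, M.F^[t] c x ≠ 0 → x ∈ boxF d (R1 M n r) := by
  intro t x hx
  rw [mem_boxF]
  intro i
  have h1 := sp_frontier M hcomp r hr n c hcube hbound i 1 (Or.inl rfl) t x hx
  have h2 := sp_frontier M hcomp r hr n c hcube hbound i (-1) (Or.inr rfl) t x hx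
  rw [one_mul] at h1
  rw [neg_one_mul] at h2
  rw [R1]
  omega

lemma cube_sub_box (M : Sandpile d) (n r : ℕ) : cubeF d n ⊆ boxF d (R1 M n r) := by
  intro x hx
  rw [mem_cubeF] at hx
  rw [mem_boxF]
  intro i
  have := hx i
  have h1 : n ≤ R1 M n r := by rw [R1]; exact Nat.le_add_right _ _
  have h2 : (n:ℤ) ≤ ((R1 M n r : ℕ) : ℤ) := by exact_mod_cast h1
  omega

lemma mass_box (M : Sandpile d) (hcomp : M.Complete) (r : ℕ) (hr : M.IsRadius r)
    (n : ℕ) (c : (Fin d → ℤ) → ℕ) (hcube : InCube n c)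
    (hbound : ∀ x, c x < 2 * M.θ) (t : ℕ) :
    ∑ x ∈ boxF d (R1 M n r), M.F^[t] c x ≤ (2 * M.θ - 1) * n ^ d := by
  have h1 : ∑ x ∈ boxF d (R1 M n r), M.F^[t] c x
      = ∑ x ∈ boxF d (R1 M n r), c x := by
    apply sum_orb
    intro t' _
    refine ⟨fun x hx => supp_box M hcomp r hr n c hcube hbound t' x hx, ?_⟩
    intro x y hy h
    apply supp_box M hcomp r hr n c hcube hbound (t'+1) x
    rw [Function.iterate_succ_apply']
    have h2 := F_ge_target M (M.F^[t'] c) x y hy h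
    have h3 := M.D_pos y hy
    omega
  rw [h1]
  exact mass_le M n c hcube hbound _ (cube_sub_box M n r)

/-- The potential strictly increases at every active step. -/
lemma Phi_step (M : Sandpile d) (hcomp : M.Complete) (r : ℕ) (hr : M.IsRadius r)
    (n : ℕ) (c : (Fin d → ℤ) → ℕ) (hcube : InCube n c)
    (hbound : ∀ x, c x < 2 * M.θ) (φ : (Fin d → ℤ) → ℤ)
    (hg : ∀ u : Fin d → ℤ,
      1 ≤ (∑ y ∈ M.N, (M.D y : ℤ) * φ (u - y)) - (M.θ:ℤ) * φ u)
    (t : ℕ) (hunst : ∃ x, M.θ ≤ M.F^[t] c x) :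
    (∑ x ∈ boxF d (R1 M n r), (M.F^[t] c x : ℤ) * φ x) + 1
      ≤ ∑ x ∈ boxF d (R1 M n r), (M.F^[t+1] c x : ℤ) * φ x := by
  classical
  set ct := M.F^[t] c with hct
  set Box := boxF d (R1 M n r) with hBox
  set I : (Fin d → ℤ) → ℤ := fun u => if M.θ ≤ ct u then 1 else 0 with hI
  have hsuppt : ∀ x, ct x ≠ 0 → x ∈ Box :=
    fun x hx => supp_box M hcomp r hr n c hcube hbound t x hx
  have hsuppt1 : ∀ x, M.F ct x ≠ 0 → x ∈ Box := by
    intro x hx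
    apply supp_box M hcomp r hr n c hcube hbound (t+1) x
    rwa [Function.iterate_succ_apply']
  have hcast : ∀ x, (M.F^[t+1] c x : ℤ)
      = (ct x : ℤ) - (M.θ:ℤ) * I x + ∑ y ∈ M.N, (M.D y : ℤ) * I (x + y) := by
    intro x
    have hk := F_key M ct x
    have hk2 : ((M.F ct x : ℕ) : ℤ) + (M.θ:ℤ) * I x
        = (ct x : ℤ) + ∑ y ∈ M.N, (M.D y : ℤ) * I (x + y) := by
      rw [hI]
      push_cast
      exact_mod_cast congrArg (Nat.cast : ℕ → ℤ) hk
    rw [Function.iterate_succ_apply', ← hct]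
    omega
  set U := Box.filter (fun u => M.θ ≤ ct u) with hU
  have e1 : ∑ x ∈ Box, I x * φ x = ∑ u ∈ U, φ u := by
    rw [hU, Finset.sum_filter]
    apply Finset.sum_congr rfl
    intro x _
    rw [hI]
    simp [ite_mul]
  have e2 : ∀ y ∈ M.N, ∑ x ∈ Box, I (x + y) * φ x = ∑ u ∈ U, φ (u - y) := by
    intro y hy
    have ef : ∑ x ∈ Box, I (x + y) * φ x
        = ∑ x ∈ Box.filter (fun x => M.θ ≤ ct (x + y)), φ x := by
      rw [Finset.sum_filter]
      apply Finset.sum_congr rfl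
      intro x _
      rw [hI]
      simp [ite_mul]
    rw [ef]
    apply Finset.sum_nbij' (i := fun x => x + y) (j := fun u => u - y)
    · intro a ha
      rw [Finset.mem_filter] at ha
      rw [hU, Finset.mem_filter]
      refine ⟨?_, ha.2⟩
      apply hsuppt
      have := theta_pos M
      have := ha.2
      omega
    · intro u hu
      rw [hU, Finset.mem_filter] at hu
      rw [Finset.mem_filter]
      have hcond : M.θ ≤ ct (u - y + y) := by rw [sub_add_cancel]; exact hu.2
      refine ⟨?_, hcond⟩
      apply hsuppt1
      have h2 := F_ge_target M ct (u - y) y hy hcond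
      have h3 := M.D_pos y hy
      omega
    · intro a _; rw [add_sub_cancel_right]
    · intro a _; rw [sub_add_cancel]
    · intro a _; rw [add_sub_cancel_right]
  have expand : ∑ x ∈ Box, (M.F^[t+1] c x : ℤ) * φ x
      = (∑ x ∈ Box, (ct x : ℤ) * φ x) - (M.θ:ℤ) * (∑ x ∈ Box, I x * φ x)
        + ∑ x ∈ Box, (∑ y ∈ M.N, (M.D y : ℤ) * I (x + y)) * φ x := by
    rw [Finset.mul_sum, ← Finset.sum_sub_distrib, ← Finset.sum_add_distrib]
    apply Finset.sum_congr rfl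
    intro x _
    rw [hcast x]
    ring
  have swap : ∑ x ∈ Box, (∑ y ∈ M.N, (M.D y : ℤ) * I (x + y)) * φ x
      = ∑ u ∈ U, ∑ y ∈ M.N, (M.D y : ℤ) * φ (u - y) := by
    calc ∑ x ∈ Box, (∑ y ∈ M.N, (M.D y : ℤ) * I (x + y)) * φ x
        = ∑ x ∈ Box, ∑ y ∈ M.N, (M.D y : ℤ) * (I (x + y) * φ x) := by
          apply Finset.sum_congr rfl
          intro x _
          rw [Finset.sum_mul]
          apply Finset.sum_congr rfl
          intro y _
          ring
    _ = ∑ y ∈ M.N, ∑ x ∈ Box, (M.D y : ℤ) * (I (x + y) * φ x) := Finset.sum_comm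
    _ = ∑ y ∈ M.N, (M.D y : ℤ) * ∑ u ∈ U, φ (u - y) := by
          apply Finset.sum_congr rfl
          intro y hy
          rw [← Finset.mul_sum, e2 y hy]
    _ = ∑ y ∈ M.N, ∑ u ∈ U, (M.D y : ℤ) * φ (u - y) := by
          apply Finset.sum_congr rfl
          intro y _
          rw [Finset.mul_sum]
    _ = ∑ u ∈ U, ∑ y ∈ M.N, (M.D y : ℤ) * φ (u - y) := Finset.sum_comm
  have final : ∑ x ∈ Box, (M.F^[t+1] c x : ℤ) * φ x
      = (∑ x ∈ Box, (ct x : ℤ) * φ x)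
        + ∑ u ∈ U, ((∑ y ∈ M.N, (M.D y : ℤ) * φ (u - y)) - (M.θ:ℤ) * φ u) := by
    rw [expand, swap, e1, Finset.sum_sub_distrib, ← Finset.mul_sum]
    ring
  rw [final]
  have hUne : 1 ≤ U.card := by
    obtain ⟨x₀, hx₀⟩ := hunst
    have hx₀B : x₀ ∈ Box := by
      apply hsuppt
      have := theta_pos M
      omega
    have : x₀ ∈ U := by rw [hU, Finset.mem_filter]; exact ⟨hx₀B, hx₀⟩
    exact Finset.card_pos.2 ⟨x₀, this⟩
  have hsum : (U.card : ℤ) ≤ ∑ u ∈ U, ((∑ y ∈ M.N, (M.D y : ℤ) * φ (u - y)) - (M.θ:ℤ) * φ u) := by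
    have := Finset.card_nsmul_le_sum U
      (fun u => (∑ y ∈ M.N, (M.D y : ℤ) * φ (u - y)) - (M.θ:ℤ) * φ u) 1
      (fun u _ => hg u)
    simpa using this
  have hcard : (1:ℤ) ≤ (U.card : ℤ) := by exact_mod_cast hUne
  linarith

/-- Absolute bound for the potential. -/
lemma Phi_abs (M : Sandpile d) (hcomp : M.Complete) (r : ℕ) (hr : M.IsRadius r)
    (n : ℕ) (c : (Fin d → ℤ) → ℕ) (hcube : InCube n c)
    (hbound : ∀ x, c x < 2 * M.θ) (φ : (Fin d → ℤ) → ℤ) (Cφ : ℕ)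
    (hφ : ∀ x ∈ boxF d (R1 M n r), |φ x| ≤ (Cφ:ℤ)) (t : ℕ) :
    |∑ x ∈ boxF d (R1 M n r), (M.F^[t] c x : ℤ) * φ x|
      ≤ (((2 * M.θ - 1) * n ^ d * Cφ : ℕ) : ℤ) := by
  set Box := boxF d (R1 M n r) with hBox
  calc |∑ x ∈ Box, (M.F^[t] c x : ℤ) * φ x|
      ≤ ∑ x ∈ Box, |(M.F^[t] c x : ℤ) * φ x| := Finset.abs_sum_le_sum_abs _ _
  _ = ∑ x ∈ Box, (M.F^[t] c x : ℤ) * |φ x| := by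
      apply Finset.sum_congr rfl
      intro x _
      rw [abs_mul, Nat.abs_cast]
  _ ≤ ∑ x ∈ Box, (M.F^[t] c x : ℤ) * (Cφ:ℤ) := by
      apply Finset.sum_le_sum
      intro x hx
      exact mul_le_mul_of_nonneg_left (hφ x hx) (by positivity)
  _ = (∑ x ∈ Box, (M.F^[t] c x : ℤ)) * (Cφ:ℤ) := by rw [Finset.sum_mul]
  _ ≤ (((2 * M.θ - 1) * n ^ d : ℕ) : ℤ) * (Cφ:ℤ) := by
      apply mul_le_mul_of_nonneg_right _ (by positivity)
      have h1 := mass_box M hcomp r hr n c hcube hbound t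
      have h2 : (∑ x ∈ Box, (M.F^[t] c x : ℤ))
          = ((∑ x ∈ Box, M.F^[t] c x : ℕ) : ℤ) := by push_cast; rfl
      rw [h2]
      exact_mod_cast h1
  _ = (((2 * M.θ - 1) * n ^ d * Cφ : ℕ) : ℤ) := by push_cast; ring

end Potential

section Gains
variable {d : ℕ}

lemma theta_cast (M : Sandpile d) : (M.θ:ℤ) = ∑ y ∈ M.N, (M.D y:ℤ) := by
  rw [Sandpile.θ]
  push_cast
  rfl

lemma norm_sq_ge_one (M : Sandpile d) {y : Fin d → ℤ} (hy : y ∈ M.N) :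
    (1:ℤ) ≤ ∑ i, (y i)^2 := by
  have hy0 : y ≠ 0 := fun h => M.zero_not_mem (h ▸ hy)
  obtain ⟨i, hi⟩ := Function.ne_iff.1 hy0
  have hne : y i ≠ 0 := by simpa using hi
  have h1 : (1:ℤ) ≤ (y i)^2 := by
    have := Int.one_le_abs hne
    nlinarith [sq_abs (y i), abs_nonneg (y i)]
  calc (1:ℤ) ≤ (y i)^2 := h1
  _ ≤ ∑ j, (y j)^2 :=
      Finset.single_le_sum (f := fun j => (y j)^2)
        (fun j _ => sq_nonneg _) (Finset.mem_univ i)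

/-- Gain of the quadratic potential under zero drift. -/
lemma gain_quad (M : Sandpile d)
    (hμ : ∀ i : Fin d, ∑ y ∈ M.N, (M.D y:ℤ) * y i = 0) (u : Fin d → ℤ) :
    1 ≤ (∑ y ∈ M.N, (M.D y : ℤ) * (∑ i, ((u - y) i)^2))
      - (M.θ:ℤ) * (∑ i, (u i)^2) := by
  have hexp : ∀ y : Fin d → ℤ, (∑ i, ((u - y) i)^2)
      = (∑ i, (u i)^2) + (∑ i, (y i)^2) - 2 * (∑ i, u i * y i) := by
    intro y
    have h1 : ∀ i : Fin d, ((u - y) i)^2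
        = ((u i)^2 + ((y i)^2 - 2 * (u i * y i))) := by
      intro i
      rw [Pi.sub_apply]
      ring
    rw [Finset.sum_congr rfl (fun i _ => h1 i), Finset.sum_add_distrib,
      Finset.sum_sub_distrib, ← Finset.mul_sum]
    ring
  have hstep : (∑ y ∈ M.N, (M.D y : ℤ) * (∑ i, ((u - y) i)^2))
      - (M.θ:ℤ) * (∑ i, (u i)^2)
      = (∑ y ∈ M.N, (M.D y:ℤ) * (∑ i, (y i)^2))
        - 2 * (∑ y ∈ M.N, (M.D y:ℤ) * (∑ i, u i * y i)) := by
    rw [theta_cast M, Finset.sum_mul, ← Finset.sum_sub_distrib]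
    have h2 : ∀ y ∈ M.N,
        (M.D y:ℤ) * (∑ i, ((u - y) i)^2) - (M.D y:ℤ) * (∑ i, (u i)^2)
        = (M.D y:ℤ) * (∑ i, (y i)^2) - 2 * ((M.D y:ℤ) * (∑ i, u i * y i)) := by
      intro y _
      rw [hexp y]
      ring
    rw [Finset.sum_congr rfl h2, Finset.sum_sub_distrib, ← Finset.mul_sum]
  have hQ : ∑ y ∈ M.N, (M.D y:ℤ) * (∑ i, u i * y i) = 0 := by
    have hsw : ∀ y ∈ M.N, (M.D y:ℤ) * (∑ i, u i * y i)
        = ∑ i, u i * ((M.D y:ℤ) * y i) := by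
      intro y _
      rw [Finset.mul_sum]
      apply Finset.sum_congr rfl
      intro i _
      ring
    rw [Finset.sum_congr rfl hsw, Finset.sum_comm]
    apply Finset.sum_eq_zero
    intro i _
    rw [← Finset.mul_sum, hμ i, mul_zero]
  have hPsum : (∑ y ∈ M.N, (M.D y:ℤ))
      ≤ ∑ y ∈ M.N, (M.D y:ℤ) * (∑ i, (y i)^2) := by
    apply Finset.sum_le_sum
    intro y hy
    exact le_mul_of_one_le_right (by positivity) (norm_sq_ge_one M hy)
  have hθ1 : (1:ℤ) ≤ (M.θ:ℤ) := by exact_mod_cast theta_pos M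
  have h3 : (1:ℤ) ≤ ∑ y ∈ M.N, (M.D y:ℤ) := by rw [← theta_cast M]; exact hθ1
  have h4 := hstep
  rw [hQ] at h4
  linarith

/-- Gain of the linear potential under nonzero drift. -/
lemma gain_lin (M : Sandpile d) (i₀ : Fin d)
    (hμ0 : ∑ y ∈ M.N, (M.D y:ℤ) * y i₀ ≠ 0) (u : Fin d → ℤ) :
    1 ≤ (∑ y ∈ M.N, (M.D y : ℤ) *
        (-(∑ i, (u - y) i * (∑ v ∈ M.N, (M.D v:ℤ) * v i))))
      - (M.θ:ℤ) * (-(∑ i, u i * (∑ v ∈ M.N, (M.D v:ℤ) * v i))) := by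
  set μ : Fin d → ℤ := fun i => ∑ v ∈ M.N, (M.D v:ℤ) * v i with hμdef
  have hexp : ∀ y : Fin d → ℤ,
      (-(∑ i, (u - y) i * μ i)) = (-(∑ i, u i * μ i)) + ∑ i, y i * μ i := by
    intro y
    have h1 : ∀ i : Fin d, (u - y) i * μ i = u i * μ i - y i * μ i := by
      intro i
      rw [Pi.sub_apply]
      ring
    rw [Finset.sum_congr rfl (fun i _ => h1 i), Finset.sum_sub_distrib]
    ring
  have hstep : (∑ y ∈ M.N, (M.D y : ℤ) * (-(∑ i, (u - y) i * μ i)))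
      - (M.θ:ℤ) * (-(∑ i, u i * μ i))
      = ∑ y ∈ M.N, (M.D y:ℤ) * (∑ i, y i * μ i) := by
    rw [theta_cast M, Finset.sum_mul, ← Finset.sum_sub_distrib]
    have h2 : ∀ y ∈ M.N,
        (M.D y:ℤ) * (-(∑ i, (u - y) i * μ i)) - (M.D y:ℤ) * (-(∑ i, u i * μ i))
        = (M.D y:ℤ) * (∑ i, y i * μ i) := by
      intro y _
      rw [hexp y]
      ring
    rw [Finset.sum_congr rfl h2]
  have hsq : ∑ y ∈ M.N, (M.D y:ℤ) * (∑ i, y i * μ i) = ∑ i, μ i * μ i := by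
    have hsw : ∀ y ∈ M.N, (M.D y:ℤ) * (∑ i, y i * μ i)
        = ∑ i, ((M.D y:ℤ) * y i) * μ i := by
      intro y _
      rw [Finset.mul_sum]
      apply Finset.sum_congr rfl
      intro i _
      ring
    rw [Finset.sum_congr rfl hsw, Finset.sum_comm]
    apply Finset.sum_congr rfl
    intro i _
    rw [← Finset.sum_mul]
  have hpos : (1:ℤ) ≤ ∑ i, μ i * μ i := by
    have h1 : (1:ℤ) ≤ μ i₀ * μ i₀ := by
      have h2 : μ i₀ ≠ 0 := hμ0
      have h3 := Int.one_le_abs h2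
      nlinarith [abs_nonneg (μ i₀), abs_mul_abs_self (μ i₀)]
    calc (1:ℤ) ≤ μ i₀ * μ i₀ := h1
    _ ≤ ∑ i, μ i * μ i :=
        Finset.single_le_sum (f := fun i => μ i * μ i)
          (fun i _ => mul_self_nonneg _) (Finset.mem_univ i₀)
  have h4 := hstep
  rw [hsq] at h4
  linarith

lemma mu_abs (M : Sandpile d) (r : ℕ) (hr : M.IsRadius r) (i : Fin d) :
    |∑ y ∈ M.N, (M.D y:ℤ) * y i| ≤ (M.θ:ℤ) * r := by
  calc |∑ y ∈ M.N, (M.D y:ℤ) * y i| ≤ ∑ y ∈ M.N, |(M.D y:ℤ) * y i| :=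
      Finset.abs_sum_le_sum_abs _ _
  _ = ∑ y ∈ M.N, (M.D y:ℤ) * |y i| := by
      apply Finset.sum_congr rfl
      intro y _
      rw [abs_mul, Nat.abs_cast]
  _ ≤ ∑ y ∈ M.N, (M.D y:ℤ) * (r:ℤ) := by
      apply Finset.sum_le_sum
      intro y hy
      exact mul_le_mul_of_nonneg_left (abs_coord_le M r hr y hy i) (by positivity)
  _ = (M.θ:ℤ) * r := by rw [← Finset.sum_mul, theta_cast M]

lemma abs_quad (R : ℕ) (x : Fin d → ℤ) (hx : x ∈ boxF d R) :
    |∑ i, (x i)^2| ≤ ((d * R^2 : ℕ) : ℤ) := by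
  rw [abs_of_nonneg (Finset.sum_nonneg fun i _ => sq_nonneg _)]
  calc ∑ i, (x i)^2 ≤ ∑ _i : Fin d, ((R:ℤ))^2 := by
        apply Finset.sum_le_sum
        intro i _
        have h := (mem_boxF.1 hx) i
        nlinarith [h.1, h.2]
  _ = (d:ℤ) * (R:ℤ)^2 := by
        rw [Finset.sum_const, Finset.card_univ, Fintype.card_fin, nsmul_eq_mul]
  _ = ((d * R^2 : ℕ) : ℤ) := by push_cast; ring

lemma abs_lin (M : Sandpile d) (r : ℕ) (hr : M.IsRadius r) (R : ℕ)
    (x : Fin d → ℤ) (hx : x ∈ boxF d R) :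
    |-(∑ i, x i * (∑ v ∈ M.N, (M.D v:ℤ) * v i))| ≤ ((d * (R * (M.θ * r)) : ℕ) : ℤ) := by
  rw [abs_neg]
  calc |∑ i, x i * (∑ v ∈ M.N, (M.D v:ℤ) * v i)|
      ≤ ∑ i, |x i * (∑ v ∈ M.N, (M.D v:ℤ) * v i)| := Finset.abs_sum_le_sum_abs _ _
  _ ≤ ∑ _i : Fin d, (R:ℤ) * ((M.θ:ℤ) * r) := by
      apply Finset.sum_le_sum
      intro i _
      rw [abs_mul]
      have h1 : |x i| ≤ (R:ℤ) := by
        have h := (mem_boxF.1 hx) i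
        rw [abs_le]
        exact ⟨h.1, h.2⟩
      have h2 := mu_abs M r hr i
      have h3 : (0:ℤ) ≤ |x i| := abs_nonneg _
      have h4 : (0:ℤ) ≤ |∑ v ∈ M.N, (M.D v:ℤ) * v i| := abs_nonneg _
      nlinarith
  _ = (d:ℤ) * ((R:ℤ) * ((M.θ:ℤ) * r)) := by
        rw [Finset.sum_const, Finset.card_univ, Fintype.card_fin, nsmul_eq_mul]
  _ = ((d * (R * (M.θ * r)) : ℕ) : ℤ) := by push_cast; ring

lemma unstable_all (M : Sandpile d) (c : (Fin d → ℤ) → ℕ) (T : ℕ)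
    (h : ¬ M.Stable (M.F^[T] c)) : ∀ t, t ≤ T → ∃ x, M.θ ≤ M.F^[t] c x := by
  intro t ht
  by_contra hno
  push_neg at hno
  have hst : M.Stable (M.F^[t] c) := fun x => hno x
  have hp := stable_persist M c t hst (T - t)
  rw [show t + (T - t) = T by omega] at hp
  rw [hp] at h
  exact h hst

lemma Phi_grow (M : Sandpile d) (hcomp : M.Complete) (r : ℕ) (hr : M.IsRadius r)
    (n : ℕ) (c : (Fin d → ℤ) → ℕ) (hcube : InCube n c)
    (hbound : ∀ x, c x < 2 * M.θ) (φ : (Fin d → ℤ) → ℤ)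
    (hg : ∀ u : Fin d → ℤ,
      1 ≤ (∑ y ∈ M.N, (M.D y : ℤ) * φ (u - y)) - (M.θ:ℤ) * φ u)
    (T : ℕ) (hunst : ∀ t, t ≤ T → ∃ x, M.θ ≤ M.F^[t] c x) :
    (∑ x ∈ boxF d (R1 M n r), (c x : ℤ) * φ x) + T
      ≤ ∑ x ∈ boxF d (R1 M n r), (M.F^[T] c x : ℤ) * φ x := by
  induction T with
  | zero => simp
  | succ T ih =>
      have h1 := ih (fun t ht => hunst t (by omega))
      have h2 := Phi_step M hcomp r hr n c hcube hbound φ hg T (hunst T (by omega))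
      push_cast
      push_cast at h1 h2
      linarith

end Gains

section Numeric

lemma numeric_bounds (d θ r n : ℕ) (hd : 1 ≤ d) (hθ : 1 ≤ θ) (hrr : 1 ≤ r)
    (hn : 1 ≤ n) :
    (2*θ-1)*n^d * (d * (n + 3*r*((2*θ-1)*n^d+1))^2)
      < 2^(3*d+4) * d^(d+1) * θ^(d+2) * r^(d+1) * n^(d^2+2*d) ∧
    2 * ((2*θ-1)*n^d * (d * ((n + 3*r*((2*θ-1)*n^d+1)) * (θ*r))))
      < 2^(3*d+4) * d^(d+1) * θ^(d+2) * r^(d+1) * n^(d^2+2*d) := by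
  have hn1 : 1 ≤ n^d := Nat.one_le_pow _ _ (by omega)
  set R := n + 3*r*((2*θ-1)*n^d+1) with hR
  have h1 : (2*θ-1)*n^d + 1 ≤ 2*θ*n^d := by
    have e : (2*θ-1)*n^d + n^d = 2*θ*n^d := by
      have e2 : (2*θ-1) + 1 = 2*θ := by omega
      calc (2*θ-1)*n^d + n^d = ((2*θ-1)+1)*n^d := by rw [Nat.add_mul, Nat.one_mul]
      _ = 2*θ*n^d := by rw [e2]
    omega
  have hS : (2*θ-1)*n^d ≤ 2*(θ*n^d) := by
    have := Nat.mul_le_mul_right (n^d) (show 2*θ-1 ≤ 2*θ by omega)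
    calc (2*θ-1)*n^d ≤ 2*θ*n^d := this
    _ = 2*(θ*n^d) := by ring
  have hRle : R ≤ 7*(θ*(r*n^d)) := by
    have hnn : n ≤ n^d := Nat.le_self_pow (by omega) n
    have h2 : 3*r*((2*θ-1)*n^d+1) ≤ 3*r*(2*θ*n^d) := Nat.mul_le_mul_left _ h1
    have h3 : n^d ≤ θ*(r*n^d) := by
      calc n^d = 1*(1*n^d) := by ring
      _ ≤ θ*(r*n^d) := Nat.mul_le_mul hθ (Nat.mul_le_mul hrr (le_refl _))
    have h4 : 3*r*(2*θ*n^d) = 6*(θ*(r*n^d)) := by ring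
    calc R = n + 3*r*((2*θ-1)*n^d+1) := hR
    _ ≤ n^d + 3*r*(2*θ*n^d) := by omega
    _ = n^d + 6*(θ*(r*n^d)) := by rw [h4]
    _ ≤ 7*(θ*(r*n^d)) := by omega
  set Y := d * (θ^3 * (r^2 * n^(3*d))) with hY
  have hY1 : 1 ≤ Y := by
    have a1 : 1 ≤ θ^3 := Nat.one_le_pow _ _ (by omega)
    have a2 : 1 ≤ r^2 := Nat.one_le_pow _ _ (by omega)
    have a3 : 1 ≤ n^(3*d) := Nat.one_le_pow _ _ (by omega)
    calc 1 = 1*(1*(1*1)) := by ring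
    _ ≤ Y := Nat.mul_le_mul hd (Nat.mul_le_mul a1 (Nat.mul_le_mul a2 a3))
  have hpow3 : n^(3*d) = (n^d)^3 := by
    rw [show 3*d = d*3 by ring, pow_mul]
  have hquad : (2*θ-1)*n^d * (d * R^2) ≤ 98*Y := by
    have hpow : R^2 ≤ (7*(θ*(r*n^d)))^2 := Nat.pow_le_pow_left hRle 2
    calc (2*θ-1)*n^d * (d * R^2)
        ≤ (2*(θ*n^d)) * (d * (7*(θ*(r*n^d)))^2) :=
          Nat.mul_le_mul hS (Nat.mul_le_mul_left d hpow)
    _ = 98*Y := by rw [hY, hpow3]; ring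
  have hlin : 2*((2*θ-1)*n^d * (d * (R * (θ*r)))) ≤ 28*Y := by
    have c1 : 2*((2*θ-1)*n^d * (d * (R * (θ*r))))
        ≤ 2*((2*(θ*n^d)) * (d * ((7*(θ*(r*n^d))) * (θ*r)))) := by
      apply Nat.mul_le_mul_left
      exact Nat.mul_le_mul hS (Nat.mul_le_mul_left d (Nat.mul_le_mul_right _ hRle))
    have c2 : 2*((2*(θ*n^d)) * (d * ((7*(θ*(r*n^d))) * (θ*r))))
        = 28*(d*(θ^3*(r^2*(n^d*n^d)))) := by ring
    have c3 : n^d*n^d ≤ n^(3*d) := by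
      calc n^d*n^d = n^(d+d) := (pow_add n d d).symm
      _ ≤ n^(3*d) := Nat.pow_le_pow_right (by omega) (by omega)
    have c4 : 28*(d*(θ^3*(r^2*(n^d*n^d)))) ≤ 28*Y := by
      rw [hY]
      exact Nat.mul_le_mul_left 28 (Nat.mul_le_mul_left d (Nat.mul_le_mul_left _
        (Nat.mul_le_mul_left _ c3)))
    omega
  have hT : 128*Y ≤ 2^(3*d+4) * d^(d+1) * θ^(d+2) * r^(d+1) * n^(d^2+2*d) := by
    have e1 : (128:ℕ) ≤ 2^(3*d+4) := by
      calc (128:ℕ) = 2^7 := by norm_num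
      _ ≤ 2^(3*d+4) := Nat.pow_le_pow_right (by norm_num) (by omega)
    have e2 : d ≤ d^(d+1) := Nat.le_self_pow (by omega) d
    have e3 : θ^3 ≤ θ^(d+2) := Nat.pow_le_pow_right hθ (by omega)
    have e4 : r^2 ≤ r^(d+1) := Nat.pow_le_pow_right hrr (by omega)
    have e5 : n^(3*d) ≤ n^(d^2+2*d) := by
      apply Nat.pow_le_pow_right (by omega)
      have : d ≤ d^2 := by nlinarith
      omega
    calc 128*Y = ((((128*d)*θ^3)*r^2)*n^(3*d)) := by rw [hY]; ring
    _ ≤ ((((2^(3*d+4)*d^(d+1))*θ^(d+2))*r^(d+1))*n^(d^2+2*d)) :=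
        Nat.mul_le_mul (Nat.mul_le_mul (Nat.mul_le_mul (Nat.mul_le_mul e1 e2) e3) e4) e5
  have hmid : 98*Y < 128*Y := by omega
  have hmid2 : 28*Y < 128*Y := by omega
  exact ⟨lt_of_le_of_lt hquad (lt_of_lt_of_le hmid hT),
    lt_of_le_of_lt hlin (lt_of_lt_of_le hmid2 hT)⟩

end Numeric

/-- polynomial-time stabilization: for a complete neighborhood
of radius `r` and a configuration `c` within the elementary hypercube of side
`n` with all cells below `2θ`, the parallel dynamics reaches a stable
configuration within `T = 2^{3d+4}·d^{d+1}·θ^{d+2}·r^{d+1}·n^{d²+2d}` steps. -/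
theorem sandpile_polynomial_stabilization {d : ℕ} (hd : 1 ≤ d) (M : Sandpile d)
    (hcomp : M.Complete) (r : ℕ) (hr : M.IsRadius r) (n : ℕ)
    (c : (Fin d → ℤ) → ℕ) (hcube : InCube n c) (hbound : ∀ x, c x < 2 * M.θ) :
    M.Stable (M.F^[2 ^ (3 * d + 4) * d ^ (d + 1) * M.θ ^ (d + 2)
      * r ^ (d + 1) * n ^ (d ^ 2 + 2 * d)] c) := by
  classical
  set T := 2 ^ (3 * d + 4) * d ^ (d + 1) * M.θ ^ (d + 2) * r ^ (d + 1)
    * n ^ (d ^ 2 + 2 * d) with hTdef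
  have hθ1 := theta_pos M
  rcases Nat.eq_zero_or_pos n with hn0 | hn1
  · subst hn0
    have hc0 : M.Stable c := by
      intro x
      have hzero : c x = 0 := by
        apply hcube
        intro hall
        have h1 := (hall ⟨0, hd⟩).1
        have h2 := (hall ⟨0, hd⟩).2
        simp only [Nat.cast_zero] at h2
        omega
      omega
    have hc0' : M.Stable (M.F^[0] c) := hc0
    have hp := stable_persist M c 0 hc0' T
    rw [Nat.zero_add] at hp
    rw [hp]
    exact hc0
  · by_contra hns
    have hr1 := r_pos M hcomp r hr hd
    have hunst := unstable_all M c T hns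
    have hnum := numeric_bounds d M.θ r n hd hθ1 hr1 hn1
    by_cases hμ : ∀ i : Fin d, ∑ y ∈ M.N, (M.D y:ℤ) * y i = 0
    · -- zero drift: quadratic potential
      set φ : (Fin d → ℤ) → ℤ := fun x => ∑ i, (x i)^2 with hφdef
      have hg : ∀ u : Fin d → ℤ,
          1 ≤ (∑ y ∈ M.N, (M.D y : ℤ) * φ (u - y)) - (M.θ:ℤ) * φ u :=
        fun u => gain_quad M hμ u
      have hgrow := Phi_grow M hcomp r hr n c hcube hbound φ hg T hunst
      have habs := Phi_abs M hcomp r hr n c hcube hbound φ (d * (R1 M n r)^2)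
        (fun x hx => abs_quad (R1 M n r) x hx) T
      have h0 : 0 ≤ ∑ x ∈ boxF d (R1 M n r), (c x : ℤ) * φ x :=
        Finset.sum_nonneg fun x _ => mul_nonneg (by positivity)
          (Finset.sum_nonneg fun i _ => sq_nonneg _)
      have hup : (∑ x ∈ boxF d (R1 M n r), (M.F^[T] c x : ℤ) * φ x)
          ≤ (((2 * M.θ - 1) * n ^ d * (d * (R1 M n r)^2) : ℕ) : ℤ) :=
        le_trans (le_abs_self _) habs
      have hfin : (T:ℤ) ≤ (((2 * M.θ - 1) * n ^ d * (d * (R1 M n r)^2) : ℕ) : ℤ) := by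
        linarith
      have hfinN : T ≤ (2 * M.θ - 1) * n ^ d * (d * (R1 M n r)^2) := by
        exact_mod_cast hfin
      rw [R1] at hfinN
      exact (Nat.lt_irrefl T (Nat.lt_of_le_of_lt hfinN hnum.1)).elim
    · -- nonzero drift: linear potential
      push_neg at hμ
      obtain ⟨i₀, hi₀⟩ := hμ
      set φ : (Fin d → ℤ) → ℤ :=
        fun x => -(∑ i, x i * (∑ v ∈ M.N, (M.D v:ℤ) * v i)) with hφdef
      have hg : ∀ u : Fin d → ℤ,
          1 ≤ (∑ y ∈ M.N, (M.D y : ℤ) * φ (u - y)) - (M.θ:ℤ) * φ u :=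
        fun u => gain_lin M i₀ hi₀ u
      have hgrow := Phi_grow M hcomp r hr n c hcube hbound φ hg T hunst
      have habsT := Phi_abs M hcomp r hr n c hcube hbound φ
        (d * ((R1 M n r) * (M.θ * r)))
        (fun x hx => abs_lin M r hr (R1 M n r) x hx) T
      have habs0 := Phi_abs M hcomp r hr n c hcube hbound φ
        (d * ((R1 M n r) * (M.θ * r)))
        (fun x hx => abs_lin M r hr (R1 M n r) x hx) 0
      have hup : (∑ x ∈ boxF d (R1 M n r), (M.F^[T] c x : ℤ) * φ x)
          ≤ (((2 * M.θ - 1) * n ^ d * (d * ((R1 M n r) * (M.θ * r))) : ℕ) : ℤ) :=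
        le_trans (le_abs_self _) habsT
      have hlow : -((((2 * M.θ - 1) * n ^ d * (d * ((R1 M n r) * (M.θ * r))) : ℕ) : ℤ))
          ≤ ∑ x ∈ boxF d (R1 M n r), (M.F^[0] c x : ℤ) * φ x :=
        neg_le_of_abs_le habs0
      have h00 : (∑ x ∈ boxF d (R1 M n r), (M.F^[0] c x : ℤ) * φ x)
          = ∑ x ∈ boxF d (R1 M n r), (c x : ℤ) * φ x := rfl
      rw [h00] at hlow
      have hfin : (T:ℤ) ≤ 2 * (((2 * M.θ - 1) * n ^ d
          * (d * ((R1 M n r) * (M.θ * r))) : ℕ) : ℤ) := by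
        linarith
      have hfinN : T ≤ 2 * ((2 * M.θ - 1) * n ^ d * (d * ((R1 M n r) * (M.θ * r)))) := by
        exact_mod_cast hfin
      rw [R1] at hfinN
      exact (Nat.lt_irrefl T (Nat.lt_of_le_of_lt hfinN hnum.2)).elim
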